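/- Every ultrafilter x on ℕ containing L_2 is either irreducible or a product of two ultrafilters each containing L_1 (i.e., each concentrated on the primes). -/

import Mathlib

/-- `L n` : positive naturals with exactly `n` prime factors counted with multiplicity. -/
def L (n : ℕ) : Set ℕ+ := {m : ℕ+ | (m : ℕ).primeFactorsList.length = n}

/-- Product of ultrafilters on `ℕ+`: `A ∈ umul x y ↔ {n | {m | n*m ∈ A} ∈ y} ∈ x`. -/
def umul (x y : Ultrafilter ℕ+) : Ultrafilter ℕ+ :=
  x.bind fun n => y.map fun m => n * m

/-- tilde-divisibility. -/
def tdvd (u v : Ultrafilter ℕ+) : Prop :=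
  ∀ A ∈ u, {m : ℕ+ | ∃ a ∈ A, a ∣ m} ∈ v

/-- irreducible ultrafilter. -/
def Irred (p : Ultrafilter ℕ+) : Prop :=
  p ≠ pure 1 ∧ ∀ x y : Ultrafilter ℕ+, p = umul x y → x = pure 1 ∨ y = pure 1

/-- Ω is additive on `ℕ+`. -/
lemma omega_mul (n m : ℕ+) :
    ((n * m : ℕ+) : ℕ).primeFactorsList.length
      = (n : ℕ).primeFactorsList.length + (m : ℕ).primeFactorsList.length := by
  have := (Nat.perm_primeFactorsList_mul (a := (n : ℕ)) (b := (m : ℕ))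
    n.ne_zero m.ne_zero).length_eq
  simpa using this

lemma mem_umul {A : Set ℕ+} {y z : Ultrafilter ℕ+} :
    A ∈ umul y z ↔ {n : ℕ+ | {m : ℕ+ | n * m ∈ A} ∈ z} ∈ y := by
  change A ∈ Filter.bind (↑y) (fun n => ↑(z.map fun m => n * m)) ↔ _
  rw [Filter.mem_bind']
  rfl

lemma eq_pure_one_of_singleton_mem {y : Ultrafilter ℕ+} (h : {(1 : ℕ+)} ∈ y) :
    y = pure 1 :=
  Ultrafilter.coe_injective (le_antisymm (Filter.le_pure_iff.2 h)
    (Ultrafilter.unique _ (Filter.le_pure_iff.2 h)).ge)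

lemma ne_one_mem {y : Ultrafilter ℕ+} (h : y ≠ pure 1) : {n : ℕ+ | n ≠ 1} ∈ y := by
  have : ¬ {(1 : ℕ+)} ∈ y := fun hs => h (eq_pure_one_of_singleton_mem hs)
  have := (Ultrafilter.compl_mem_iff_notMem).2 this
  exact this


lemma omega_pos_of_ne_one (n : ℕ+) (hn : n ≠ 1) :
    1 ≤ (n : ℕ).primeFactorsList.length := by
  rcases Nat.eq_zero_or_pos (n : ℕ).primeFactorsList.length with h | h
  · exfalso
    have := (Nat.primeFactorsList_eq_nil (n : ℕ)).1 (List.length_eq_zero_iff.1 h)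
    rcases this with h1 | h1
    · exact n.ne_zero h1
    · exact hn (PNat.coe_injective h1)
  · exact h

theorem stmt_6 (x : Ultrafilter ℕ+) (hx : L 2 ∈ x) :
    Irred x ∨ ∃ y z : Ultrafilter ℕ+, L 1 ∈ y ∧ L 1 ∈ z ∧ x = umul y z := by
  by_cases h : Irred x
  · exact Or.inl h
  right
  unfold Irred at h
  push_neg at h
  have hx1 : x ≠ pure 1 := by
    intro hxe
    rw [hxe] at hx
    have : (1 : ℕ+) ∈ L 2 := hx
    simp [L] at this
  obtain ⟨y, z, hxyz, hy, hz⟩ := h hx1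
  have hmem : {n : ℕ+ | {m : ℕ+ | n * m ∈ L 2} ∈ z} ∈ y := mem_umul.1 (hxyz ▸ hx)
  have hyn : {n : ℕ+ | n ≠ 1} ∈ y := ne_one_mem hy
  have hzn : {m : ℕ+ | m ≠ 1} ∈ z := ne_one_mem hz
  have key : ∀ n : ℕ+, n ≠ 1 → {m : ℕ+ | n * m ∈ L 2} ∈ z →
      (n : ℕ).primeFactorsList.length = 1 ∧ {m : ℕ+ | m ∈ L 1} ∈ z := by
    intro n hn hfib
    have hint : ({m : ℕ+ | n * m ∈ L 2} ∩ {m | m ≠ 1}).Nonempty :=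
      Ultrafilter.nonempty_of_mem (Filter.inter_mem hfib hzn)
    obtain ⟨m, hm2, hm1⟩ := hint
    have hΩ : (n : ℕ).primeFactorsList.length + (m : ℕ).primeFactorsList.length = 2 := by
      have := hm2
      simp only [L, Set.mem_setOf_eq] at this
      rw [← omega_mul]; exact this
    have h1n := omega_pos_of_ne_one n hn
    have h1m := omega_pos_of_ne_one m hm1
    have hn1 : (n : ℕ).primeFactorsList.length = 1 := by omega
    refine ⟨hn1, ?_⟩
    have : {m : ℕ+ | n * m ∈ L 2} ⊆ {m : ℕ+ | m ∈ L 1} := by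
      intro m' hm'
      simp only [L, Set.mem_setOf_eq] at hm' ⊢
      rw [omega_mul, hn1] at hm'
      omega
    exact Filter.mem_of_superset hfib this
  refine ⟨y, z, ?_, ?_, hxyz⟩
  · have : {n : ℕ+ | {m : ℕ+ | n * m ∈ L 2} ∈ z} ∩ {n | n ≠ 1} ⊆ L 1 := by
      intro n ⟨hf, hn⟩
      exact (key n hn hf).1
    exact Filter.mem_of_superset (Filter.inter_mem hmem hyn) this
  · obtain ⟨n, hf, hn⟩ := Ultrafilter.nonempty_of_mem (Filter.inter_mem hmem hyn)
    exact (key n hn hf).2
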